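/- Let q = s + t with t ≥ 1, let K, L ∈ ℂ^{q×s} be such that LᴴK is invertible, and let U, W ∈ ℂ^{q×t} have full column rank (Ux = 0 implies x = 0, and Wx = 0 implies x = 0) with LᴴU = 0 and KᴴW = 0. Then WᴴU is invertible and I − K(LᴴK)⁻¹Lᴴ = U(WᴴU)⁻¹Wᴴ. -/

import Mathlib

open Matrix

private lemma isUnit_of_ker_zero {n : ℕ} (B : Matrix (Fin n) (Fin n) ℂ)
    (h : ∀ v : Fin n → ℂ, B *ᵥ v = 0 → v = 0) : IsUnit B := by
  rw [← Matrix.mulVec_injective_iff_isUnit]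
  intro x y hxy
  have hsub : B *ᵥ (x - y) = 0 := by rw [mulVec_sub, hxy, sub_self]
  have := h _ hsub
  exact sub_eq_zero.mp this

/-- the complementary projection `I − K(LᴴK)⁻¹Lᴴ` equals
`U(WᴴU)⁻¹Wᴴ` when `range U = (range L)ᗮ` and `range W = (range K)ᗮ`
(expressed via `LᴴU = 0`, `KᴴW = 0` and full column rank of `U, W`). -/
theorem stmt_5 {s t : ℕ} (ht : 1 ≤ t)
    (K L : Matrix (Fin (s + t)) (Fin s) ℂ) (hLK : IsUnit (Lᴴ * K))
    (U W : Matrix (Fin (s + t)) (Fin t) ℂ)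
    (hU : ∀ x : Fin t → ℂ, U.mulVec x = 0 → x = 0)
    (hW : ∀ x : Fin t → ℂ, W.mulVec x = 0 → x = 0)
    (hLU : Lᴴ * U = 0) (hKW : Kᴴ * W = 0) :
    IsUnit (Wᴴ * U) ∧
      (1 : Matrix (Fin (s + t)) (Fin (s + t)) ℂ) - K * (Lᴴ * K)⁻¹ * Lᴴ =
        U * (Wᴴ * U)⁻¹ * Wᴴ := by
  have hKL : IsUnit (Kᴴ * L) := by
    have := (isUnit_conjTranspose (A := Lᴴ * K)).mpr hLK
    simpa [conjTranspose_mul] using this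
  -- The square matrix [L | W] is invertible
  set A : Matrix (Fin (s + t)) (Fin (s + t)) ℂ :=
    (fromCols L W).submatrix id finSumFinEquiv.symm with hA
  have hAunit : IsUnit A := by
    apply isUnit_of_ker_zero
    intro v hv
    have hv' : fromCols L W *ᵥ (v ∘ finSumFinEquiv.symm.symm) = 0 := by
      have h0 := submatrix_mulVec_equiv (fromCols L W) v
        (id : Fin (s + t) → Fin (s + t)) finSumFinEquiv.symm
      rw [← hA, hv] at h0
      funext i
      simpa using (congrFun h0 i).symm
    set x : Fin s → ℂ := fun i => v (finSumFinEquiv (Sum.inl i)) with hx'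
    set y : Fin t → ℂ := fun i => v (finSumFinEquiv (Sum.inr i)) with hy'
    have hxy : (v ∘ finSumFinEquiv.symm.symm) = Sum.elim x y := by
      funext j; cases j <;> rfl
    rw [hxy, fromCols_mulVec_sumElim] at hv'
    have hx : x = 0 := by
      have h1 : Kᴴ *ᵥ (L *ᵥ x + W *ᵥ y) = 0 := by rw [hv']; simp
      rw [mulVec_add, mulVec_mulVec, mulVec_mulVec, hKW] at h1
      have h2 : (Kᴴ * L) *ᵥ x = 0 := by simpa using h1
      have hinj := Matrix.mulVec_injective_iff_isUnit.mpr hKL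
      have : (Kᴴ * L) *ᵥ x = (Kᴴ * L) *ᵥ 0 := by rw [h2, mulVec_zero]
      exact hinj this
    have hy : y = 0 := hW y (by rw [hx] at hv'; simpa using hv')
    funext j
    obtain ⟨j', rfl⟩ := finSumFinEquiv.surjective j
    cases j' with
    | inl i => exact congrFun hx i
    | inr i => exact congrFun hy i
  -- key: ker Lᴴ ∩ ker Wᴴ = 0
  have hkey : ∀ v : Fin (s + t) → ℂ, Lᴴ *ᵥ v = 0 → Wᴴ *ᵥ v = 0 → v = 0 := by
    intro v hL hWv
    have hAH : IsUnit Aᴴ := (isUnit_conjTranspose (A := A)).mpr hAunit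
    have hinj := Matrix.mulVec_injective_iff_isUnit.mpr hAH
    have hzero : Aᴴ *ᵥ v = 0 := by
      have hAH' : Aᴴ = (fromRows Lᴴ Wᴴ).submatrix finSumFinEquiv.symm
          (id : Fin (s + t) → Fin (s + t)) := by
        rw [hA]
        ext i j
        rcases h : (finSumFinEquiv.symm i) with i' | i' <;>
          simp [conjTranspose_apply, submatrix_apply, fromCols, fromRows_apply_inl, fromRows_apply_inr, h]
      rw [hAH']
      funext i
      show (fromRows Lᴴ Wᴴ *ᵥ v) (finSumFinEquiv.symm i) = (0 : Fin (s + t) → ℂ) i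
      rw [fromRows_mulVec, hL, hWv]
      rcases finSumFinEquiv.symm i with i' | i' <;> simp
    have : Aᴴ *ᵥ v = Aᴴ *ᵥ 0 := by rw [hzero, mulVec_zero]
    exact hinj this
  -- invertibility of Wᴴ U
  have hWU : IsUnit (Wᴴ * U) := by
    apply isUnit_of_ker_zero
    intro x hx
    have h1 : Wᴴ *ᵥ (U *ᵥ x) = 0 := by rw [mulVec_mulVec]; exact hx
    have h2 : Lᴴ *ᵥ (U *ᵥ x) = 0 := by rw [mulVec_mulVec, hLU, zero_mulVec]
    exact hU x (hkey _ h2 h1)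
  refine ⟨hWU, ?_⟩
  have hLKd : (Lᴴ * K) * (Lᴴ * K)⁻¹ = 1 :=
    mul_nonsing_inv _ ((isUnit_iff_isUnit_det _).mp hLK)
  have hWUd : (Wᴴ * U) * (Wᴴ * U)⁻¹ = 1 :=
    mul_nonsing_inv _ ((isUnit_iff_isUnit_det _).mp hWU)
  set M : Matrix (Fin (s + t)) (Fin (s + t)) ℂ :=
    ((1 : Matrix (Fin (s + t)) (Fin (s + t)) ℂ) - K * (Lᴴ * K)⁻¹ * Lᴴ) -
      U * (Wᴴ * U)⁻¹ * Wᴴ with hM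
  have hLM : Lᴴ * M = 0 := by
    rw [hM, Matrix.mul_sub, Matrix.mul_sub, Matrix.mul_one]
    have h1 : Lᴴ * (K * (Lᴴ * K)⁻¹ * Lᴴ) = Lᴴ := by
      rw [← Matrix.mul_assoc, ← Matrix.mul_assoc, Matrix.mul_assoc Lᴴ K, ← Matrix.mul_assoc,
        hLKd, Matrix.one_mul]
    have h2 : Lᴴ * (U * (Wᴴ * U)⁻¹ * Wᴴ) = 0 := by
      rw [← Matrix.mul_assoc, ← Matrix.mul_assoc, hLU, Matrix.zero_mul, Matrix.zero_mul]
    rw [h1, h2, sub_self, sub_zero]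
  have hWM : Wᴴ * M = 0 := by
    have hWK : Wᴴ * K = 0 := by
      have := congrArg conjTranspose hKW
      simpa [conjTranspose_mul] using this
    rw [hM, Matrix.mul_sub, Matrix.mul_sub, Matrix.mul_one]
    have h1 : Wᴴ * (K * (Lᴴ * K)⁻¹ * Lᴴ) = 0 := by
      rw [← Matrix.mul_assoc, ← Matrix.mul_assoc, hWK, Matrix.zero_mul, Matrix.zero_mul]
    have h2 : Wᴴ * (U * (Wᴴ * U)⁻¹ * Wᴴ) = Wᴴ := by
      rw [← Matrix.mul_assoc, ← Matrix.mul_assoc, Matrix.mul_assoc Wᴴ U, ← Matrix.mul_assoc,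
        hWUd, Matrix.one_mul]
    rw [h1, h2, sub_zero, sub_self]
  have hM0 : M = 0 := by
    ext i j
    have hcol : M *ᵥ (Pi.single j 1) = 0 := by
      apply hkey
      · rw [mulVec_mulVec, hLM, zero_mulVec]
      · rw [mulVec_mulVec, hWM, zero_mulVec]
    have := congrFun hcol i
    simpa [mulVec_single] using this
  exact sub_eq_zero.mp hM0
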